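/- For every x > 0 that is not an integer, the function f₁ is differentiable at x with f₁′(x) = −2α; that is, the series defining f₁ may be differentiated term by term at non-integer points. -/

import Mathlib

open Filter MeasureTheory Set

/-- For every `x > 0` that is not an integer, the function `f₁` is
differentiable at `x` with `f₁′(x) = −2α`. -/
theorem stmt_6
    (a : ℕ → ℂ) (α : ℂ)
    (ha : Tendsto (fun N : ℕ => ∑ n ∈ Finset.Icc 1 N, a n / (n : ℂ) ^ 2)
      atTop (nhds (2 * α)))
    (f₁ : ℝ → ℂ)
    (hf₁ : ∀ x : ℝ, 0 ≤ x →
      Tendsto (fun N : ℕ => -∑ n ∈ Finset.Icc 1 N,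
          a n / (n : ℂ) * ((Int.fract (x / (n : ℝ)) : ℝ) : ℂ))
        atTop (nhds (f₁ x)))
    (x : ℝ) (hx : 0 < x) (hxZ : ∀ m : ℤ, x ≠ (m : ℝ)) :
    HasDerivAt f₁ (-(2 * α)) x := by
  set M : ℕ := ⌊x⌋.toNat + 1 with hMdef
  have hM : x < (M : ℝ) := by
    have h0 : (0:ℤ) ≤ ⌊x⌋ := Int.floor_nonneg.2 hx.le
    have : ((⌊x⌋.toNat : ℤ) : ℝ) = (⌊x⌋ : ℝ) := by
      exact_mod_cast congrArg (fun z : ℤ => (z : ℝ)) (Int.toNat_of_nonneg h0)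
    calc x < (⌊x⌋ : ℝ) + 1 := Int.lt_floor_add_one x
    _ = (M : ℝ) := by rw [hMdef]; push_cast [← this]; push_cast; ring
  -- each floor is locally constant
  have hfloor : ∀ n : ℕ, 1 ≤ n →
      ∀ᶠ y in nhds x, ⌊y / (n : ℝ)⌋ = ⌊x / (n : ℝ)⌋ := by
    intro n hn
    have hn0 : (0:ℝ) < n := by exact_mod_cast hn
    have hlt : ((⌊x / (n:ℝ)⌋ : ℝ)) < x / n := by
      refine lt_of_le_of_ne (Int.floor_le _) ?_
      intro h
      exact hxZ (⌊x / (n:ℝ)⌋ * n) (by push_cast; rw [h]; field_simp)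
    have hub : x / n < (⌊x / (n:ℝ)⌋ : ℝ) + 1 := Int.lt_floor_add_one _
    have hmem : x ∈ Ioo ((⌊x / (n:ℝ)⌋ : ℝ) * n) (((⌊x / (n:ℝ)⌋ : ℝ) + 1) * n) := by
      constructor
      · exact (lt_div_iff₀ hn0).1 hlt
      · exact (div_lt_iff₀ hn0).1 hub
    filter_upwards [isOpen_Ioo.mem_nhds hmem] with y hy
    have h1 : ((⌊x / (n:ℝ)⌋ : ℝ)) ≤ y / n := (le_div_iff₀ hn0).2 hy.1.le
    have h2 : y / n < (⌊x / (n:ℝ)⌋ : ℝ) + 1 := (div_lt_iff₀ hn0).2 hy.2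
    exact Int.floor_eq_iff.2 ⟨by exact_mod_cast h1, by exact_mod_cast h2⟩
  have hE : ∀ᶠ y in nhds x, 0 < y ∧ y < (M : ℝ) ∧
      ∀ n ∈ Finset.Icc 1 M, ⌊y / (n : ℝ)⌋ = ⌊x / (n : ℝ)⌋ := by
    have h1 : ∀ᶠ y in nhds x, 0 < y := eventually_gt_nhds hx
    have h2 : ∀ᶠ y in nhds x, y < (M : ℝ) := eventually_lt_nhds hM
    have h3 : ∀ᶠ y in nhds x, ∀ n ∈ Finset.Icc 1 M, ⌊y / (n : ℝ)⌋ = ⌊x / (n : ℝ)⌋ := by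
      rw [Filter.eventually_all_finset]
      intro n hn
      exact hfloor n (Finset.mem_Icc.1 hn).1
    filter_upwards [h1, h2, h3] with y a b c using ⟨a, b, c⟩
  set C : ℂ := ∑ n ∈ Finset.Icc 1 M, a n / (n : ℂ) * ((⌊x / (n : ℝ)⌋ : ℤ) : ℂ) with hCdef
  have key : ∀ y : ℝ, 0 < y → y < (M : ℝ) →
      (∀ n ∈ Finset.Icc 1 M, ⌊y / (n : ℝ)⌋ = ⌊x / (n : ℝ)⌋) →
      f₁ y = -(2 * α) * (y : ℂ) + C := by
    intro y hy0 hyM hfl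
    have h1 := hf₁ y hy0.le
    have hS : Tendsto (fun N : ℕ => -(y:ℂ) * (∑ n ∈ Finset.Icc 1 N, a n / (n:ℂ)^2) + C)
        atTop (nhds (-(y:ℂ) * (2*α) + C)) := (ha.const_mul _).add_const C
    have heq : ∀ᶠ N : ℕ in atTop,
        -(y:ℂ) * (∑ n ∈ Finset.Icc 1 N, a n / (n:ℂ)^2) + C
        = -∑ n ∈ Finset.Icc 1 N, a n / (n:ℂ) * ((Int.fract (y / (n:ℝ)) : ℝ) : ℂ) := by
      filter_upwards [eventually_ge_atTop M] with N hN
      have hsub : Finset.Icc 1 M ⊆ Finset.Icc 1 N := Finset.Icc_subset_Icc_right hN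
      have hterm : ∀ n ∈ Finset.Icc 1 N,
          a n / (n:ℂ) * ((Int.fract (y / (n:ℝ)) : ℝ) : ℂ)
          = (y:ℂ) * (a n / (n:ℂ)^2) - a n / (n:ℂ) * ((⌊y / (n:ℝ)⌋ : ℤ) : ℂ) := by
        intro n hn
        have hn1 : 1 ≤ n := (Finset.mem_Icc.1 hn).1
        have hnne : (n:ℂ) ≠ 0 := by
          exact_mod_cast Nat.cast_ne_zero.2 (by omega)
        rw [Int.fract]
        push_cast
        field_simp
      have hC2 : ∑ n ∈ Finset.Icc 1 N, a n / (n:ℂ) * ((⌊y / (n:ℝ)⌋ : ℤ) : ℂ) = C := by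
        rw [hCdef]
        rw [← Finset.sum_subset hsub]
        · exact Finset.sum_congr rfl (fun n hn => by rw [hfl n hn])
        · intro n hnN hnM
          have hn1 : 1 ≤ n := (Finset.mem_Icc.1 hnN).1
          have hMn : (M:ℝ) < n := by
            have : M < n := by
              rcases Finset.mem_Icc.1 hnN with ⟨h1', h2'⟩
              simp only [Finset.mem_Icc] at hnM
              omega
            exact_mod_cast this
          have hn0 : (0:ℝ) < n := by positivity
          have hfr : ⌊y / (n:ℝ)⌋ = 0 := by
            rw [Int.floor_eq_zero_iff]
            constructor
            · positivity
            · rw [div_lt_one hn0]; linarith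
          rw [hfr]
          simp
      rw [Finset.sum_congr rfl hterm, Finset.sum_sub_distrib, ← Finset.mul_sum, hC2]
      ring
    have h2 : Tendsto (fun N : ℕ => -∑ n ∈ Finset.Icc 1 N,
        a n / (n:ℂ) * ((Int.fract (y / (n:ℝ)) : ℝ) : ℂ)) atTop
        (nhds (-(y:ℂ) * (2*α) + C)) := hS.congr' heq
    have := tendsto_nhds_unique h1 h2
    rw [this]; ring
  have hg : HasDerivAt (fun y : ℝ => -(2 * α) * (y : ℂ) + C) (-(2 * α)) x := by
    have h0 : HasDerivAt (fun y : ℝ => (y : ℂ)) 1 x := by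
      exact Complex.ofRealCLM.hasDerivAt (x := x)
    simpa using (h0.const_mul (-(2 * α))).add_const C
  apply hg.congr_of_eventuallyEq
  filter_upwards [hE] with y hy
  exact key y hy.1 hy.2.1 hy.2.2
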